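/- arXiv:2406.02891 — 3 statements merged into one kernel-verified Lean document; each statement's English description precedes it below -/
import Mathlib

section
/- Early-termination correctness for cover tree search: suppose p* minimizes D(q,·) over X, the set Q_{i-1} contains an ancestor of p* (so D(q, Q_{i-1}) ≤ D(q,p*) + 2^i), and the termination condition D(q, Q_{i-1}) ≥ 2^i(1 + 1/ε) holds for some ε ∈ (0,1). Then 2^i ≤ ε·D(q,p*), and consequently the closest point of Q_{i-1} to q under D is a (1+ε)-approximate nearest neighbor: D(q, Q_{i-1}) ≤ (1+ε)·D(q,p*). -/
/-- Early-termination correctness for cover tree search. If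
`D(q, Q_{i-1}) ≤ D(q, p*) + 2^i` (an ancestor of the true nearest neighbor `p*` is in
`Q_{i-1}`) and the termination condition `D(q, Q_{i-1}) ≥ 2^i (1 + 1/ε)` holds for
`ε ∈ (0,1)`, then `2^i ≤ ε · D(q, p*)` and `D(q, Q_{i-1}) ≤ (1 + ε) · D(q, p*)`. -/
theorem stmt9 {X : Type*} [MetricSpace X] (q pstar : X)
    (hmin : ∀ p : X, dist q pstar ≤ dist q p)
    (eps : ℝ) (heps0 : 0 < eps) (heps1 : eps < 1)
    (i : ℤ)
    (Q : Finset X) (hQ : Q.Nonempty)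
    (hub : Q.inf' hQ (fun p => dist q p) ≤ dist q pstar + (2 : ℝ) ^ i)
    (hterm : (2 : ℝ) ^ i * (1 + 1 / eps) ≤ Q.inf' hQ (fun p => dist q p)) :
    (2 : ℝ) ^ i ≤ eps * dist q pstar ∧
      Q.inf' hQ (fun p => dist q p) ≤ (1 + eps) * dist q pstar := by
  set t : ℝ := (2 : ℝ) ^ i with ht
  have htpos : 0 < t := zpow_pos (by norm_num) i
  have key : t ≤ eps * dist q pstar := by
    have h1 : t * (1 + 1 / eps) ≤ dist q pstar + t := le_trans hterm hub
    have he : t * (1 + 1 / eps) = t + t / eps := by field_simp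
    rw [he] at h1
    have h2 : t / eps ≤ dist q pstar := by linarith
    have h3 := (div_le_iff₀ heps0).mp h2
    linarith
  exact ⟨key, by nlinarith⟩
end

section
/- If a graph G on dataset X is α-shortcut reachable under a metric D with α ≥ 3, then for every vertex p and target q, greedy routing makes progress: either (p,q) ∈ E, or there is a neighbor p' of p with D(p',q) ≤ D(p,q)/α < D(p,q); hence from any start vertex, the sequence of greedy steps (always moving to the neighbor minimizing D(·,q)) reaches a vertex adjacent to or equal to q after at most log_α(Δ) steps, where Δ is the aspect ratio of X under D. -/
/-- Greedy routing on an `α`-shortcut reachable graph. If `G = (X, E)` is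
`α`-shortcut reachable under a metric `D = dist` with `α ≥ 3`, then from every vertex
`p ≠ q` either `(p, q) ∈ E` or some neighbor `p'` of `p` satisfies
`D(p', q) ≤ D(p, q)/α < D(p, q)`; consequently, any greedy walk `v` (always moving to
the neighbor minimizing `D(·, q)`) reaches, within `⌈log_α Δ⌉` steps, a vertex adjacent
to or equal to `q`, where `Δ = Δmax / Δmin` is the aspect ratio of `X` under `D`. -/
theorem stmt11 {X : Type*} [MetricSpace X] (E : X → X → Prop) (q : X)
    (α : ℝ) (hα : 3 ≤ α)
    (hreach : ∀ p : X, p ≠ q → ¬ E p q →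
      ∃ p', E p p' ∧ α * dist p' q ≤ dist p q)
    (Δmax Δmin : ℝ) (hΔmin : 0 < Δmin)
    (hmax : ∀ x y : X, dist x y ≤ Δmax)
    (hmin : ∀ x y : X, x ≠ y → Δmin ≤ dist x y)
    (v : ℕ → X)
    (hgreedy : ∀ n : ℕ, v n ≠ q → ¬ E (v n) q →
      E (v n) (v (n + 1)) ∧ ∀ p', E (v n) p' → dist (v (n + 1)) q ≤ dist p' q) :
    (∀ p : X, p ≠ q → E p q ∨
      ∃ p', E p p' ∧ dist p' q ≤ dist p q / α ∧ dist p' q < dist p q) ∧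
    ∃ n : ℕ, n ≤ ⌈Real.logb α (Δmax / Δmin)⌉₊ ∧ (E (v n) q ∨ v n = q) := by
  have hα0 : (0:ℝ) < α := by linarith
  have hα1 : (1:ℝ) < α := by linarith
  constructor
  · intro p hp
    by_cases hE : E p q
    · exact Or.inl hE
    · obtain ⟨p', hE', hle⟩ := hreach p hp hE
      have hd : 0 < dist p q := dist_pos.mpr hp
      refine Or.inr ⟨p', hE', ?_, ?_⟩
      · rw [le_div_iff₀ hα0]; linarith [mul_comm α (dist p' q)]
      · have : dist p q / α < dist p q := div_lt_self hd hα1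
        have h2 : dist p' q ≤ dist p q / α := by
          rw [le_div_iff₀ hα0]; linarith [mul_comm α (dist p' q)]
        linarith
  · by_contra hc
    push_neg at hc
    set N := ⌈Real.logb α (Δmax / Δmin)⌉₊ with hN
    have hc' : ∀ n ≤ N, v n ≠ q ∧ ¬ E (v n) q := by
      intro n hn
      have := hc n hn
      exact ⟨this.2, this.1⟩
    have hstep : ∀ n, v n ≠ q → ¬ E (v n) q →
        α * dist (v (n+1)) q ≤ dist (v n) q := by
      intro n hne hnE
      obtain ⟨p', hE', hle⟩ := hreach _ hne hnE
      obtain ⟨_, hmin'⟩ := hgreedy n hne hnE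
      have := hmin' p' hE'
      nlinarith
    have hbound : ∀ n ≤ N, dist (v n) q ≤ Δmax / α ^ n := by
      intro n hn
      induction n with
      | zero => simpa using hmax (v 0) q
      | succ k ih =>
        have hk : k ≤ N := Nat.le_of_succ_le hn
        obtain ⟨hne, hnE⟩ := hc' k hk
        have h1 := hstep k hne hnE
        have h2 := ih hk
        have hp : (0:ℝ) < α ^ k := pow_pos hα0 k
        rw [pow_succ]
        rw [le_div_iff₀ (by positivity)]
        rw [le_div_iff₀ hp] at h2
        nlinarith
    obtain ⟨hne, hnE⟩ := hc' N le_rfl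
    obtain ⟨p', hE', hle⟩ := hreach _ hne hnE
    have hp'q : p' ≠ q := by
      intro h; exact hnE (h ▸ hE')
    have hd1 : Δmin ≤ dist p' q := hmin _ _ hp'q
    have hbN := hbound N le_rfl
    have hpN : (0:ℝ) < α ^ N := pow_pos hα0 N
    -- Δmin ≤ Δmax
    have hΔmm : Δmin ≤ Δmax := le_trans (hmin _ _ hne) (hmax (v N) q)
    have hratio : (1:ℝ) ≤ Δmax / Δmin := (one_le_div hΔmin).mpr hΔmm
    have hlogb : Real.logb α (Δmax / Δmin) ≤ (N : ℝ) := Nat.le_ceil _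
    have hαN : Δmax / Δmin ≤ α ^ N := by
      have h1 : Δmax / Δmin = α ^ Real.logb α (Δmax / Δmin) :=
        (Real.rpow_logb hα0 (ne_of_gt hα1) (by linarith)).symm
      rw [h1, ← Real.rpow_natCast α N]
      exact Real.rpow_le_rpow_left_iff hα1 |>.mpr hlogb
    have h2 : Δmax ≤ α ^ N * Δmin := by
      rw [div_le_iff₀ hΔmin] at hαN; linarith
    -- α * Δmin ≤ dist (v N) q ≤ Δmax / α^N
    have h3 : α * Δmin ≤ Δmax / α ^ N := by nlinarith
    rw [le_div_iff₀ hpN] at h3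
    nlinarith
end

section
/- Tightness of the re-ranking bound: for every C > 1 and every k ≥ 1, there exists a finite metric space, metrics d and D with d a C-approximation of D, a dataset P and query q, such that every point in the set of k points of P closest to q under d has D-distance to q at least C' · min_{p∈P} D(q,p) for any C' < C — i.e., the re-ranking approach cannot guarantee better than a C-approximation. (Construct: it suffices to exhibit such an instance for C' arbitrarily close to C, e.g. on the real line with k+1 points.) -/
namespace Stmt16Aux

noncomputable def clamp01 (t : ℝ) : ℝ := max 0 (min t 1)

lemma clamp01_sub {a b : ℝ} (hab : a ≤ b) :
    0 ≤ clamp01 b - clamp01 a ∧ clamp01 b - clamp01 a ≤ b - a := by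
  unfold clamp01
  constructor
  · have : min a 1 ≤ min b 1 := min_le_min hab le_rfl
    have := max_le_max (le_refl (0:ℝ)) this
    linarith
  · rcases le_total a 1 with h1 | h1 <;> rcases le_total b 1 with h2 | h2 <;>
      rcases le_total a 0 with h3 | h3 <;> rcases le_total b 0 with h4 | h4 <;>
      simp [min_def, max_def] <;> split_ifs <;> linarith

noncomputable def phi (C t : ℝ) : ℝ := t + (C - 1) * clamp01 t

lemma phi_bounds (C : ℝ) (hC : 1 ≤ C) (a b : ℝ) :
    |a - b| ≤ |phi C a - phi C b| ∧ |phi C a - phi C b| ≤ C * |a - b| := by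
  wlog hab : a ≤ b with H
  · push_neg at hab
    have := H C hC b a hab.le
    rwa [abs_sub_comm a b, abs_sub_comm (phi C a) (phi C b)]
  obtain ⟨h1, h2⟩ := clamp01_sub hab
  have hC1 : (0:ℝ) ≤ C - 1 := by linarith
  have key : phi C b - phi C a = (b - a) + (C - 1) * (clamp01 b - clamp01 a) := by
    unfold phi; ring
  have hba : (0:ℝ) ≤ b - a := by linarith
  have h3 : b - a ≤ phi C b - phi C a := by nlinarith
  have h4 : phi C b - phi C a ≤ C * (b - a) := by nlinarith
  rw [abs_sub_comm a b, abs_sub_comm (phi C a) (phi C b),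
    abs_of_nonneg hba, abs_of_nonneg (by linarith : (0:ℝ) ≤ phi C b - phi C a)]
  exact ⟨h3, h4⟩

noncomputable def g (ε η : ℝ) (n : ℕ) : ℝ :=
  if n = 0 then 0 else if n = 1 then -(1 + ε) else 1 + ((n - 2 : ℕ) : ℝ) * η

lemma g_zero (ε η : ℝ) : g ε η 0 = 0 := by simp [g]

lemma g_one (ε η : ℝ) : g ε η 1 = -(1 + ε) := by simp [g]

lemma g_ge_two (ε η : ℝ) {n : ℕ} (hn : 2 ≤ n) :
    g ε η n = 1 + ((n - 2 : ℕ) : ℝ) * η := by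
  have h0 : n ≠ 0 := by omega
  have h1 : n ≠ 1 := by omega
  simp [g, h0, h1]

lemma g_inj {ε η : ℝ} (hε : 0 < ε) (hη : 0 < η) {m n : ℕ}
    (h : g ε η m = g ε η n) : m = n := by
  have hcast : ∀ j : ℕ, (0:ℝ) ≤ (j : ℝ) * η := fun j =>
    mul_nonneg (Nat.cast_nonneg j) hη.le
  rcases Nat.lt_or_ge m 2 with hm | hm <;> rcases Nat.lt_or_ge n 2 with hn | hn
  · interval_cases m <;> interval_cases n <;>
      simp_all [g_zero, g_one] <;> linarith
  · interval_cases m <;> rw [g_ge_two ε η hn] at h <;>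
      [rw [g_zero] at h; rw [g_one] at h] <;>
      have := hcast (n - 2) <;> linarith
  · interval_cases n <;> rw [g_ge_two ε η hm] at h <;>
      [rw [g_zero] at h; rw [g_one] at h] <;>
      have := hcast (m - 2) <;> linarith
  · rw [g_ge_two ε η hm, g_ge_two ε η hn] at h
    have h' : ((m - 2 : ℕ) : ℝ) = ((n - 2 : ℕ) : ℝ) :=
      mul_right_cancel₀ hη.ne' (add_left_cancel h)
    have : m - 2 = n - 2 := by exact_mod_cast h'
    omega

end Stmt16Aux

open Stmt16Aux in
/-- Tightness of the re-ranking bound. For every `C > 1`, `k ≥ 1` and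
`δ > 0`, there exists a finite metric space (metrics `d`, `D` on a type `X` with `d`
a `C`-approximation of `D`), a dataset `P`, a query `q` and a top-`k` set `S ⊆ P`
under `d` (of size `k`, with all of `P \ S` at `d`-distance from `q` at least that of
any point of `S`), such that every point of `S` has `D`-distance to `q` at least
`(C − δ)` times the distance from `q` to its true `D`-nearest neighbor in `P`. -/
theorem stmt16 (C : ℝ) (hC : 1 < C) (k : ℕ) (hk : 1 ≤ k) (δ : ℝ) (hδ : 0 < δ) :
    ∃ (X : Type) (_ : DecidableEq X) (d D : X → X → ℝ) (P S : Finset X)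
      (q pstar : X),
      -- d is a metric
      (∀ x, d x x = 0) ∧ (∀ x y, x ≠ y → 0 < d x y) ∧ (∀ x y, d x y = d y x) ∧
      (∀ x y z, d x z ≤ d x y + d y z) ∧
      -- D is a metric
      (∀ x, D x x = 0) ∧ (∀ x y, x ≠ y → 0 < D x y) ∧ (∀ x y, D x y = D y x) ∧
      (∀ x y z, D x z ≤ D x y + D y z) ∧
      -- d is a C-approximation of D
      (∀ x y, d x y ≤ D x y ∧ D x y ≤ C * d x y) ∧
      -- S is the top-k set of P under d
      S ⊆ P ∧ S.card = k ∧ S.Nonempty ∧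
      (∀ p ∈ S, ∀ p' ∈ P, p' ∉ S → d p q ≤ d p' q) ∧
      -- pstar is the true nearest neighbor in P under D
      pstar ∈ P ∧ (∀ p' ∈ P, D q pstar ≤ D q p') ∧
      -- every point of S (in particular the re-ranked answer) is ≥ (C − δ)-far
      (∀ p ∈ S, (C - δ) * D q pstar ≤ D q p) := by
  -- parameters
  set ε : ℝ := min (δ / (2 * C)) ((C - 1) / 2) with hεdef
  have hε : 0 < ε := lt_min (by positivity) (by linarith)
  have hεδ : ε ≤ δ / (2 * C) := min_le_left _ _
  have hεC : ε ≤ (C - 1) / 2 := min_le_right _ _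
  set η : ℝ := ε / k with hηdef
  have hkR : (0:ℝ) < (k : ℝ) := by exact_mod_cast hk
  have hη : 0 < η := div_pos hε hkR
  -- key computations for phi ∘ g
  have key0 : phi C (g ε η 0) = 0 := by
    rw [g_zero]; unfold phi clamp01; simp
  have key1 : phi C (g ε η 1) = -(1 + ε) := by
    rw [g_one]
    have hc : clamp01 (-(1 + ε)) = 0 := by
      unfold clamp01
      rw [min_eq_left (by linarith), max_eq_left (by linarith)]
    unfold phi; rw [hc]; ring
  have hm0 : ∀ m : ℕ, (0:ℝ) ≤ ((m - 2 : ℕ) : ℝ) * η := fun m =>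
    mul_nonneg (Nat.cast_nonneg _) hη.le
  have key2 : ∀ m : ℕ, 2 ≤ m → phi C (g ε η m) = C + ((m - 2 : ℕ) : ℝ) * η := by
    intro m hm
    rw [g_ge_two ε η hm]
    have hc : clamp01 (1 + ((m - 2 : ℕ) : ℝ) * η) = 1 := by
      unfold clamp01
      rw [min_eq_right (by have := hm0 m; linarith),
        max_eq_right (by norm_num)]
    unfold phi; rw [hc]; ring
  -- the space and functions
  refine ⟨Fin (k + 2), inferInstance,
    (fun x y => |g ε η x.val - g ε η y.val|),
    (fun x y => |phi C (g ε η x.val) - phi C (g ε η y.val)|),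
    Finset.univ.filter (fun x => 1 ≤ x.val),
    Finset.univ.filter (fun x => 2 ≤ x.val),
    ⟨0, by omega⟩, ⟨1, by omega⟩, ?_, ?_, ?_, ?_, ?_, ?_, ?_, ?_, ?_, ?_, ?_, ?_, ?_, ?_, ?_, ?_⟩
  · intro x; simp
  · intro x y hxy
    have : g ε η x.val ≠ g ε η y.val := fun h =>
      hxy (Fin.ext (g_inj hε hη h))
    exact abs_sub_pos.mpr this
  · intro x y; exact abs_sub_comm _ _
  · intro x y z; exact abs_sub_le _ _ _
  · intro x; simp
  · intro x y hxy
    have h1 : g ε η x.val ≠ g ε η y.val := fun h =>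
      hxy (Fin.ext (g_inj hε hη h))
    have := (phi_bounds C hC.le (g ε η x.val) (g ε η y.val)).1
    have h2 : 0 < |g ε η x.val - g ε η y.val| := abs_sub_pos.mpr h1
    linarith
  · intro x y; exact abs_sub_comm _ _
  · intro x y z; exact abs_sub_le _ _ _
  · intro x y; exact phi_bounds C hC.le _ _
  · intro x hx
    simp only [Finset.mem_filter, Finset.mem_univ, true_and] at *
    omega
  · -- card = k
    have himg : (Finset.univ.filter (fun x : Fin (k+2) => 2 ≤ x.val)) =
        Finset.image (fun i : Fin k => (⟨i.val + 2, by omega⟩ : Fin (k+2))) Finset.univ := by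
      ext x
      simp only [Finset.mem_filter, Finset.mem_univ, true_and, Finset.mem_image]
      constructor
      · intro hx
        refine ⟨⟨x.val - 2, by omega⟩, ?_⟩
        apply Fin.ext
        show x.val - 2 + 2 = x.val
        omega
      · rintro ⟨i, rfl⟩
        show 2 ≤ i.val + 2
        omega
    rw [himg, Finset.card_image_of_injective _ (fun a b h => by
      have : a.val + 2 = b.val + 2 := congrArg Fin.val h
      exact Fin.ext (by omega)), Finset.card_univ, Fintype.card_fin]
  · exact ⟨⟨2, by omega⟩, by simp⟩
  · -- top-k
    intro p hp p' hp' hp's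
    simp only [Finset.mem_filter, Finset.mem_univ, true_and] at hp hp' hp's
    have hp'1 : p'.val = 1 := by omega
    have hgp : g ε η p.val = 1 + ((p.val - 2 : ℕ) : ℝ) * η := g_ge_two ε η hp
    have hgp' : g ε η p'.val = -(1 + ε) := by rw [hp'1]; exact g_one ε η
    have hmη : ((p.val - 2 : ℕ) : ℝ) * η ≤ ε := by
      have hm : ((p.val - 2 : ℕ) : ℝ) ≤ (k : ℝ) := by
        have : p.val - 2 ≤ k := by omega
        exact_mod_cast this
      have h5 : ((p.val - 2 : ℕ) : ℝ) * η ≤ (k : ℝ) * η :=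
        mul_le_mul_of_nonneg_right hm hη.le
      calc ((p.val - 2 : ℕ) : ℝ) * η ≤ (k:ℝ) * (ε / k) := h5
        _ = ε := by field_simp
    have h6 := hm0 p.val
    show |g ε η p.val - g ε η 0| ≤ |g ε η p'.val - g ε η 0|
    rw [g_zero, hgp, hgp', sub_zero, sub_zero,
      abs_of_nonneg (by linarith), abs_of_nonpos (by linarith)]
    linarith
  · simp
  · -- pstar is nearest under D
    intro p' hp'
    simp only [Finset.mem_filter, Finset.mem_univ, true_and] at hp'
    show |phi C (g ε η 0) - phi C (g ε η 1)| ≤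
      |phi C (g ε η 0) - phi C (g ε η p'.val)|
    rw [key0, key1]
    rcases Nat.lt_or_ge p'.val 2 with h2 | h2
    · have hv : p'.val = 1 := by omega
      rw [hv, key1]
    · rw [key2 p'.val h2]
      have h6 := hm0 p'.val
      rw [sub_neg_eq_add, zero_add, abs_of_nonneg (by linarith),
        abs_of_nonpos (by linarith), neg_sub]
      linarith
  · -- final bound
    intro p hp
    simp only [Finset.mem_filter, Finset.mem_univ, true_and] at hp
    have h6 := hm0 p.val
    show (C - δ) * |phi C (g ε η 0) - phi C (g ε η 1)| ≤
      |phi C (g ε η 0) - phi C (g ε η p.val)|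
    rw [key0, key1, key2 p.val hp, sub_neg_eq_add, zero_add,
      abs_of_nonneg (by linarith), abs_of_nonpos (by linarith), neg_sub, sub_zero]
    rcases le_total C δ with hCδ | hCδ
    · have h7 : (C - δ) * (1 + ε) ≤ 0 :=
        mul_nonpos_of_nonpos_of_nonneg (by linarith) (by linarith)
      nlinarith
    · have hCε : C * ε ≤ δ / 2 := by
        have h8 := mul_le_mul_of_nonneg_left hεδ (by linarith : (0:ℝ) ≤ C)
        calc C * ε ≤ C * (δ / (2 * C)) := h8
          _ = δ / 2 := by field_simp
      nlinarith
end
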